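/- A nontrivial finitely generated solvable group does not satisfy property (P'): there exists r > 0 such that for every ξ in the group there is an aperiodic sequence x_1, ..., x_k of nontrivial elements of length at most r with |ξ^{ε_1} x_1 ⋯ ξ^{ε_k} x_k| ≤ r for some signs ε_i. -/

import Mathlib

/-- A single step in the Cayley graph of `G` with respect to the generating set `X`
(steps may use generators or their inverses). -/
def Step {G : Type*} [Group G] (X : Set G) (g h : G) : Prop :=
  ∃ s ∈ X, h = g * s ∨ h = g * s⁻¹

/-- `β` is a walk of length `n` in the Cayley graph. -/
def IsWalk {G : Type*} [Group G] (X : Set G) (β : ℕ → G) (n : ℕ) : Prop :=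
  ∀ i < n, Step X (β i) (β (i + 1))

/-- `β` is a closed walk of length `n` in the Cayley graph. -/
def IsClosedWalk {G : Type*} [Group G] (X : Set G) (β : ℕ → G) (n : ℕ) : Prop :=
  IsWalk X β n ∧ β 0 = β n

/-- The walk `β` (of length `n`) passes through every element of `S`. -/
def Visits {G : Type*} (β : ℕ → G) (n : ℕ) (S : Finset G) : Prop :=
  ∀ s ∈ S, ∃ i ≤ n, β i = s

/-- `S` is `ξ`-related: every `x ∈ S` has a `ξ`-neighbour `y ∈ S`. -/
def Related {G : Type*} [Group G] (ξ : G) (S : Finset G) : Prop :=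
  ∀ x ∈ S, ∃ y ∈ S, y⁻¹ * x = ξ ∨ y⁻¹ * x = ξ⁻¹

/-- Word length of `g` with respect to the generating set `X`. -/
noncomputable def wordLength {G : Type*} [Group G] (X : Set G) (g : G) : ℕ :=
  sInf {n | ∃ β : ℕ → G, β 0 = 1 ∧ β n = g ∧ IsWalk X β n}

/-- The product `ξ^{ε₁} x₁ ξ^{ε₂} x₂ ⋯ ξ^{ε_k} x_k`, where the list `l` records the
pairs `(xᵢ, εᵢ)` (with `true` standing for `+1` and `false` for `-1`). -/
def sprod {G : Type*} [Group G] (ξ : G) (l : List (G × Bool)) : G :=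
  (l.map fun p => (if p.2 then ξ else ξ⁻¹) * p.1).prod

/-- A list is `k`-aperiodic if it contains no factor of the form `y^(k+1)` with `y` nonempty. -/
def KAperiodic {α : Type*} (k : ℕ) (l : List α) : Prop :=
  ∀ x y z : List α, l = x ++ (List.replicate (k + 1) y).flatten ++ z → y = []

section AuxStmt12

private lemma rep2 {α : Type*} (y : List α) : (List.replicate (1 + 1) y).flatten = y ++ y := by
  simp [List.replicate_succ]

private lemma kap1 {α : Type*} (a : α) : KAperiodic 1 [a] := by
  intro x y z h
  rw [rep2] at h
  rcases y with _ | ⟨y1, ys⟩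
  · rfl
  · exfalso
    apply_fun List.length at h
    simp at h
    omega

private lemma kap4 {α : Type*} {a b c d : α} (h1 : a ≠ b) (h2 : b ≠ c) (h3 : c ≠ d)
    (h4 : ¬(a = c ∧ b = d)) : KAperiodic 1 [a, b, c, d] := by
  intro x y z h
  rw [rep2] at h
  rcases y with _ | ⟨y1, _ | ⟨y2, _ | ⟨y3, ys⟩⟩⟩
  · rfl
  · exfalso
    rcases x with _ | ⟨x1, _ | ⟨x2, _ | ⟨x3, _ | ⟨x4, xs⟩⟩⟩⟩ <;> simp_all
  · exfalso
    rcases x with _ | ⟨x1, xs⟩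
    · simp_all
    · apply_fun List.length at h; simp at h; omega
  · exfalso
    apply_fun List.length at h; simp at h; omega

private lemma kap6 {α : Type*} {w1 w2 w3 w4 w5 w6 : α}
    (h12 : w1 ≠ w2) (h23 : w2 ≠ w3) (h34 : w3 ≠ w4) (h45 : w4 ≠ w5) (h56 : w5 ≠ w6)
    (hb1 : ¬(w1 = w3 ∧ w2 = w4)) (hb2 : ¬(w2 = w4 ∧ w3 = w5)) (hb3 : ¬(w3 = w5 ∧ w4 = w6))
    (hc1 : ¬(w1 = w4 ∧ w2 = w5 ∧ w3 = w6)) : KAperiodic 1 [w1, w2, w3, w4, w5, w6] := by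
  intro x y z h
  rw [rep2] at h
  rcases y with _ | ⟨y1, _ | ⟨y2, _ | ⟨y3, _ | ⟨y4, ys⟩⟩⟩⟩
  · rfl
  · exfalso
    rcases x with _ | ⟨x1, _ | ⟨x2, _ | ⟨x3, _ | ⟨x4, _ | ⟨x5, _ | ⟨x6, xs⟩⟩⟩⟩⟩⟩ <;> simp_all
  · exfalso
    rcases x with _ | ⟨x1, _ | ⟨x2, _ | ⟨x3, xs⟩⟩⟩
    · simp_all
    · simp_all
    · simp_all
    · apply_fun List.length at h; simp at h; omega
  · exfalso
    rcases x with _ | ⟨x1, xs⟩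
    · simp_all
    · apply_fun List.length at h; simp at h; omega
  · exfalso
    apply_fun List.length at h; simp at h; omega

variable {G : Type*} [Group G]

private lemma wordLength_one' (X : Set G) : wordLength X 1 = 0 := by
  have h0 : 0 ∈ {n | ∃ β : ℕ → G, β 0 = 1 ∧ β n = 1 ∧ IsWalk X β n} :=
    ⟨fun _ => 1, rfl, rfl, fun i hi => absurd hi (Nat.not_lt_zero i)⟩
  exact Nat.sInf_eq_zero.mpr (Or.inl h0)

private lemma collapseA (ξ a b : G)
    (hab : b * (ξ * a⁻¹ * ξ⁻¹) = (ξ * a⁻¹ * ξ⁻¹) * b) :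
    sprod ξ [(a, true), (b, false), (a⁻¹, true), (b⁻¹, false)] = 1 := by
  simp only [sprod, List.map_cons, List.map_nil, List.prod_cons, List.prod_nil, if_true,
    Bool.false_eq_true, if_false, mul_one]
  calc ξ * a * (ξ⁻¹ * b * (ξ * a⁻¹ * (ξ⁻¹ * b⁻¹)))
      = (ξ * a⁻¹ * ξ⁻¹)⁻¹ * (b * (ξ * a⁻¹ * ξ⁻¹)) * b⁻¹ := by group
    _ = (ξ * a⁻¹ * ξ⁻¹)⁻¹ * ((ξ * a⁻¹ * ξ⁻¹) * b) * b⁻¹ := by rw [hab]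
    _ = 1 := by group

private lemma sqsort {M : Type*} [CommGroup M] (A B C D : M) (hA : A * A = 1) (hB : B * B = 1)
    (hC : C * C = 1) (hD : D * D = 1) : A * C * B * D * (A * B) * (C * D) = 1 := by
  have h : A * C * B * D * (A * B) * (C * D) = (A * A) * ((B * B) * ((C * C) * (D * D))) := by
    ac_rfl
  rw [h, hA, hB, hC, hD]; simp

private lemma collapse6 (H : Subgroup G) (hcomm : ∀ x ∈ H, ∀ y ∈ H, x * y = y * x)
    (hsq : ∀ x ∈ H, x * x = 1) (hnorm : H.Normal) (ξ a b c d : G)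
    (ha : a ∈ H) (hb : b ∈ H) (hc : c ∈ H) (hd : d ∈ H) :
    sprod ξ [(a, true), (c, false), (b, true), (d, false), (a * b, true), (c * d, false)] = 1 := by
  letI : CommGroup H := { (inferInstance : Group H) with
    mul_comm := fun x y => Subtype.ext (hcomm _ x.2 _ y.2) }
  have mA : ξ * a * ξ⁻¹ ∈ H := hnorm.conj_mem a ha ξ
  have mB : ξ * b * ξ⁻¹ ∈ H := hnorm.conj_mem b hb ξ
  have key : (⟨ξ * a * ξ⁻¹, mA⟩ : H) * ⟨c, hc⟩ * ⟨ξ * b * ξ⁻¹, mB⟩ * ⟨d, hd⟩ *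
      (⟨ξ * a * ξ⁻¹, mA⟩ * ⟨ξ * b * ξ⁻¹, mB⟩) * (⟨c, hc⟩ * ⟨d, hd⟩) = 1 :=
    sqsort _ _ _ _ (Subtype.ext (hsq _ mA)) (Subtype.ext (hsq _ mB))
      (Subtype.ext (hsq _ hc)) (Subtype.ext (hsq _ hd))
  have key' : ((((⟨ξ * a * ξ⁻¹, mA⟩ : H) * ⟨c, hc⟩ * ⟨ξ * b * ξ⁻¹, mB⟩ * ⟨d, hd⟩ *
      (⟨ξ * a * ξ⁻¹, mA⟩ * ⟨ξ * b * ξ⁻¹, mB⟩) * (⟨c, hc⟩ * ⟨d, hd⟩) : H) : G)) = 1 := by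
    rw [key]; rfl
  simp only [Subgroup.coe_mul] at key'
  simp only [sprod, List.map_cons, List.map_nil, List.prod_cons, List.prod_nil, if_true,
    Bool.false_eq_true, if_false, mul_one]
  calc ξ * a * (ξ⁻¹ * c * (ξ * b * (ξ⁻¹ * d * (ξ * (a * b) * (ξ⁻¹ * (c * d))))))
      = (ξ * a * ξ⁻¹) * c * (ξ * b * ξ⁻¹) * d * ((ξ * a * ξ⁻¹) * (ξ * b * ξ⁻¹)) * (c * d) := by
        group
    _ = 1 := key'

private lemma finite_aux (A C : Subgroup G) (hnorm : A.Normal) (hAC : A ≤ C)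
    (hC : ∀ g : G, (∀ x ∈ A, g * x * g⁻¹ = x) → g ∈ C) (hfin : Finite C) : Finite G := by
  classical
  haveI : Finite A := Finite.of_injective (Subgroup.inclusion hAC)
    (Subgroup.inclusion_injective hAC)
  let f : G → (A → A) := fun g x => ⟨g * (x : G) * g⁻¹, hnorm.conj_mem _ x.2 g⟩
  have hfib : ∀ g h : G, f g = f h → h⁻¹ * g ∈ C := by
    intro g h hf
    apply hC
    intro x hx
    have h1 : g * x * g⁻¹ = h * x * h⁻¹ := congrArg Subtype.val (congrFun hf ⟨x, hx⟩)
    calc h⁻¹ * g * x * (h⁻¹ * g)⁻¹ = h⁻¹ * (g * x * g⁻¹) * h := by group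
      _ = h⁻¹ * (h * x * h⁻¹) * h := by rw [h1]
      _ = x := by group
  let sec : (A → A) → G := fun t => if h : ∃ g, f g = t then h.choose else 1
  have hsec : ∀ (t) (h : ∃ g, f g = t), f (sec t) = t := by
    intro t h
    simp only [sec, dif_pos h]
    exact h.choose_spec
  let Φ : G → ((A → A) × C) := fun g =>
    (f g, ⟨(sec (f g))⁻¹ * g, hfib _ _ (hsec (f g) ⟨g, rfl⟩).symm⟩)
  have hinj : Function.Injective Φ := by
    intro g h hgh
    have h1 : f g = f h := congrArg Prod.fst hgh
    have h2 : (sec (f g))⁻¹ * g = (sec (f h))⁻¹ * h :=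
      congrArg Subtype.val (congrArg Prod.snd hgh)
    rw [h1] at h2
    exact mul_left_cancel h2
  exact Finite.of_injective Φ hinj

end AuxStmt12

/-- A nontrivial finitely generated solvable group does not satisfy property `(P')`:
there is `r > 0` such that for every `ξ` there is a nonempty aperiodic sequence of
nontrivial elements `xᵢ` with `|xᵢ| ≤ r` and signs `εᵢ` with
`|ξ^{ε₁} x₁ ⋯ ξ^{ε_k} x_k| ≤ r`. -/
theorem stmt_12 {G : Type*} [Group G] [Nontrivial G] (X : Finset G)
    (hX : Subgroup.closure (X : Set G) = ⊤) (hsolv : IsSolvable G) :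
    ∃ r : ℕ, 0 < r ∧ ∀ ξ : G, ∃ l : List (G × Bool), l ≠ [] ∧
      KAperiodic 1 (l.map Prod.fst) ∧
      (∀ p ∈ l, p.1 ≠ 1 ∧ wordLength (X : Set G) p.1 ≤ r) ∧
      wordLength (X : Set G) (sprod ξ l) ≤ r := by
  classical
  rcases finite_or_infinite G with hfin | hinf
  · -- G finite: any single nontrivial letter works, with r the diameter bound.
    haveI := hfin
    cases nonempty_fintype G
    obtain ⟨g0, hg0⟩ := exists_ne (1 : G)
    refine ⟨1 + Finset.univ.sup (fun g => wordLength (X : Set G) g), by omega, fun ξ => ?_⟩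
    refine ⟨[(g0, true)], by simp, ?_, ?_, ?_⟩
    · simpa using kap1 g0
    · intro p hp
      simp only [List.mem_singleton] at hp
      subst hp
      refine ⟨hg0, ?_⟩
      exact le_trans (Finset.le_sup (f := fun g => wordLength (X : Set G) g)
        (Finset.mem_univ _)) (by omega)
    · exact le_trans (Finset.le_sup (f := fun g => wordLength (X : Set G) g)
        (Finset.mem_univ _)) (by omega)
  · -- G infinite
    have hex : ∃ n, derivedSeries G n = ⊥ := (isSolvable_def G).mp hsolv
    have hn : derivedSeries G (Nat.find hex) = ⊥ := Nat.find_spec hex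
    have hn0 : Nat.find hex ≠ 0 := by
      intro h0
      rw [h0, derivedSeries_zero] at hn
      obtain ⟨x, hx⟩ := exists_ne (1 : G)
      have : x ∈ (⊥ : Subgroup G) := hn ▸ Subgroup.mem_top x
      exact hx (Subgroup.mem_bot.mp this)
    obtain ⟨m, hm⟩ := Nat.exists_eq_succ_of_ne_zero hn0
    have hA₀ne : derivedSeries G m ≠ ⊥ := Nat.find_min hex (by omega)
    set A₀ := derivedSeries G m with hA₀def
    have hstep : ⁅A₀, A₀⁆ = ⊥ := by
      rw [← derivedSeries_succ]
      have hm' : Nat.find hex = m + 1 := hm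
      rw [← hm']
      exact hn
    have habel : ∀ x ∈ A₀, ∀ y ∈ A₀, x * y = y * x := by
      intro x hx y hy
      have h := Subgroup.commutator_mem_commutator hx hy
      rw [hstep, Subgroup.mem_bot] at h
      exact commutatorElement_eq_one_iff_mul_comm.mp h
    have hA₀norm : A₀.Normal := derivedSeries_normal G m
    obtain ⟨a0, ha0mem, ha0ne⟩ := (Subgroup.bot_or_exists_ne_one A₀).resolve_left hA₀ne
    set C := Subgroup.centralizer (A₀ : Set G) with hCdef
    have hmemC : ∀ g : G, g ∈ C ↔ ∀ x ∈ A₀, x * g = g * x := by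
      intro g
      rw [hCdef, Subgroup.mem_centralizer_iff]
      constructor
      · intro h x hx; exact h x hx
      · intro h x hx; exact h x hx
    have hA₀C : A₀ ≤ C := fun x hx => (hmemC x).mpr (fun y hy => habel y hy x hx)
    have hCnorm : C.Normal := by
      constructor
      intro c hc g
      rw [hmemC] at hc ⊢
      intro x hx
      have hx' : g⁻¹ * x * g ∈ A₀ := by
        have h := hA₀norm.conj_mem x hx g⁻¹
        simpa using h
      have h1 := hc _ hx'
      calc x * (g * c * g⁻¹) = g * ((g⁻¹ * x * g) * c) * g⁻¹ := by group
        _ = g * (c * (g⁻¹ * x * g)) * g⁻¹ := by rw [h1]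
        _ = (g * c * g⁻¹) * x := by group
    rcases finite_or_infinite C with hCfin | hCinf
    · -- centralizer finite forces G finite, contradiction
      exfalso
      have hGfin : Finite G := by
        apply finite_aux A₀ C hA₀norm hA₀C ?_ hCfin
        intro g hg
        rw [hmemC]
        intro x hx
        have h' := hg x hx
        calc x * g = (g * x * g⁻¹) * g := by rw [h']
          _ = g * x := by group
      haveI := hGfin
      exact not_finite G
    · have hCinfset : (C : Set G).Infinite := Set.infinite_coe_iff.mp hCinf
      have pick : ∀ s : Set G, s.Finite → ∃ g, g ∈ C ∧ g ∉ s := by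
        intro s hs
        obtain ⟨g, hg⟩ := (hCinfset.diff hs).nonempty
        exact ⟨g, hg.1, hg.2⟩
      by_cases hP : ∃ a ∈ A₀, a ≠ 1 ∧ ∃ b ∈ C, b ≠ 1 ∧ b ≠ a ∧ b ≠ a⁻¹ ∧
          (a * a ≠ 1 ∨ b * b ≠ 1)
      · -- main case: word (a, b, a⁻¹, b⁻¹)
        obtain ⟨a, haA, ha1, b, hbC, hb1, hba, hbai, hsq2⟩ := hP
        refine ⟨wordLength (X : Set G) a + wordLength (X : Set G) b +
          wordLength (X : Set G) a⁻¹ + wordLength (X : Set G) b⁻¹ + 1, by omega, fun ξ => ?_⟩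
        refine ⟨[(a, true), (b, false), (a⁻¹, true), (b⁻¹, false)], by simp, ?_, ?_, ?_⟩
        · have h3 : a⁻¹ ≠ b⁻¹ := fun h => hba (inv_injective h).symm
          have h4 : ¬(a = a⁻¹ ∧ b = b⁻¹) := by
            rintro ⟨e1, e2⟩
            rcases hsq2 with h | h
            · exact h (by rw [mul_eq_one_iff_eq_inv]; exact e1)
            · exact h (by rw [mul_eq_one_iff_eq_inv]; exact e2)
          simpa using kap4 (Ne.symm hba) hbai h3 h4
        · intro p hp
          simp only [List.mem_cons, List.not_mem_nil, or_false] at hp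
          rcases hp with rfl | rfl | rfl | rfl
          · refine ⟨ha1, ?_⟩; show wordLength (X : Set G) a ≤ _; omega
          · refine ⟨hb1, ?_⟩; show wordLength (X : Set G) b ≤ _; omega
          · refine ⟨inv_ne_one.mpr ha1, ?_⟩; show wordLength (X : Set G) a⁻¹ ≤ _; omega
          · refine ⟨inv_ne_one.mpr hb1, ?_⟩; show wordLength (X : Set G) b⁻¹ ≤ _; omega
        · have hmem : ξ * a⁻¹ * ξ⁻¹ ∈ A₀ := hA₀norm.conj_mem _ (A₀.inv_mem haA) ξ
          have hc : b * (ξ * a⁻¹ * ξ⁻¹) = (ξ * a⁻¹ * ξ⁻¹) * b :=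
            ((hmemC b).mp hbC _ hmem).symm
          rw [collapseA ξ a b hc, wordLength_one']
          omega
      · -- degenerate case: centralizer is an elementary abelian 2-group
        push_neg at hP
        obtain ⟨b0, hb0C, hb0⟩ := pick {1, a0, a0⁻¹}
          (((Set.finite_singleton a0⁻¹).insert a0).insert 1)
        simp only [Set.mem_insert_iff, Set.mem_singleton_iff, not_or] at hb0
        have ha0sq : a0 * a0 = 1 :=
          (hP a0 ha0mem ha0ne b0 hb0C hb0.1 hb0.2.1 hb0.2.2).1
        have hsqC : ∀ x ∈ C, x * x = 1 := by
          intro x hx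
          by_cases hx1 : x = 1
          · rw [hx1]; simp
          by_cases hxa : x = a0
          · rw [hxa]; exact ha0sq
          by_cases hxai : x = a0⁻¹
          · rw [hxai, ← mul_inv_rev, ha0sq, inv_one]
          exact (hP a0 ha0mem ha0ne x hx hx1 hxa hxai).2
        have hinvC : ∀ x ∈ C, x⁻¹ = x := fun x hx => inv_eq_of_mul_eq_one_right (hsqC x hx)
        have hcommC : ∀ x ∈ C, ∀ y ∈ C, x * y = y * x := by
          intro x hx y hy
          calc x * y = (x * y)⁻¹ := (hinvC _ (C.mul_mem hx hy)).symm
            _ = y⁻¹ * x⁻¹ := mul_inv_rev x y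
            _ = y * x := by rw [hinvC x hx, hinvC y hy]
        obtain ⟨a, haC, ha⟩ := pick {1} (Set.finite_singleton 1)
        obtain ⟨b, hbC, hb⟩ := pick {1, a} ((Set.finite_singleton a).insert 1)
        obtain ⟨c, hcC, hc⟩ := pick {1, a, b}
          (((Set.finite_singleton b).insert a).insert 1)
        obtain ⟨d, hdC, hd⟩ := pick {1, a, b, c, a * b, c * (a * b)}
          ((((((Set.finite_singleton (c * (a * b))).insert (a * b)).insert c).insert
            b).insert a).insert 1)
        simp only [Set.mem_insert_iff, Set.mem_singleton_iff, not_or] at ha hb hc hd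
        have hab1 : a * b ≠ 1 := by
          intro h
          have h2 : a = b⁻¹ := mul_eq_one_iff_eq_inv.mp h
          rw [hinvC b hbC] at h2
          exact hb.2 h2.symm
        have hcd1 : c * d ≠ 1 := by
          intro h
          have h2 : c = d⁻¹ := mul_eq_one_iff_eq_inv.mp h
          rw [hinvC d hdC] at h2
          exact hd.2.2.2.1 h2.symm
        refine ⟨wordLength (X : Set G) a + wordLength (X : Set G) b + wordLength (X : Set G) c +
          wordLength (X : Set G) d + wordLength (X : Set G) (a * b) +
          wordLength (X : Set G) (c * d) + 1, by omega, fun ξ => ?_⟩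
        refine ⟨[(a, true), (c, false), (b, true), (d, false), (a * b, true), (c * d, false)],
          by simp, ?_, ?_, ?_⟩
        · have h56 : a * b ≠ c * d := by
            intro h
            apply hd.2.2.2.2.2
            have hdc : d = c⁻¹ * (a * b) := by rw [h]; group
            rwa [hinvC c hcC] at hdc
          have h34 : b ≠ d := fun h => hd.2.2.1 h.symm
          have h12 : a ≠ c := fun h => hc.2.1 h.symm
          have hb3 : ¬(b = a * b ∧ d = c * d) := fun h => ha (right_eq_mul.mp h.1)
          simpa using kap6 h12 hc.2.2 h34 hd.2.2.2.2.1 h56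
            (fun h => hb.2 h.1.symm) (fun h => hd.2.2.2.1 h.1.symm) hb3
            (fun h => hd.2.1 h.1.symm)
        · intro p hp
          simp only [List.mem_cons, List.not_mem_nil, or_false] at hp
          rcases hp with rfl | rfl | rfl | rfl | rfl | rfl
          · refine ⟨ha, ?_⟩; show wordLength (X : Set G) a ≤ _; omega
          · refine ⟨hc.1, ?_⟩; show wordLength (X : Set G) c ≤ _; omega
          · refine ⟨hb.1, ?_⟩; show wordLength (X : Set G) b ≤ _; omega
          · refine ⟨hd.1, ?_⟩; show wordLength (X : Set G) d ≤ _; omega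
          · refine ⟨hab1, ?_⟩; show wordLength (X : Set G) (a * b) ≤ _; omega
          · refine ⟨hcd1, ?_⟩; show wordLength (X : Set G) (c * d) ≤ _; omega
        · rw [collapse6 C hcommC hsqC hCnorm ξ a b c d haC hbC hcC hdC, wordLength_one']
          omega
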